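/- Let a be a positive integer with a ∈ {1, 2, 4}. If there exist integers h, p, q, t, r satisfying the four equations 6h − a²p = 2a; 14a²h − 3a⁴p + a⁵q = 0; 5ah − 6a³p − a⁴q + a⁵t = 0; and h − 6a³q + a⁵r = 0, then a = 1. -/
import Mathlib


/-- Numerical core of Proposition 7.3: among `a ∈ {1, 2, 4}`, only `a = 1` admits
integer solutions to the four equations. -/
theorem stmt_8 (a : ℤ) (ha : 0 < a) (hmem : a = 1 ∨ a = 2 ∨ a = 4)
    (hex : ∃ h p q t r : ℤ,
      6 * h - a ^ 2 * p = 2 * a ∧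
      14 * a ^ 2 * h - 3 * a ^ 4 * p + a ^ 5 * q = 0 ∧
      5 * a * h - 6 * a ^ 3 * p - a ^ 4 * q + a ^ 5 * t = 0 ∧
      h - 6 * a ^ 3 * q + a ^ 5 * r = 0) :
    a = 1 := by
  obtain ⟨h, p, q, t, r, e1, e2, e3, e4⟩ := hex
  rcases hmem with rfl | rfl | rfl
  · rfl
  · norm_num at e1 e2 e3 e4; omega
  · norm_num at e1 e2 e3 e4; omega
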